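/- For every L-evaluation u : P → L and every n, the following identity of subpresheaves holds: ↓ₙ₊₁u = ⋂ { (↓ₙv) → ⋃_{v ≰ₙ w} (↓ₙw) : v an L-evaluation such that v ≁ₙ u_p for all p ∈ P }, where → is Heyting implication of subpresheaves; moreover all intersections and unions involved are finite (up to repetitions). -/

import Mathlib

/-- A finite rooted poset: a finite partial order with a greatest element (the root). -/
structure FRP : Type 1 where
  carrier : Type
  [po : PartialOrder carrier]
  [fin : Finite carrier]
  root : carrier
  le_root : ∀ x : carrier, x ≤ root

attribute [instance] FRP.po FRP.fin

/-- The downset of a point, as a finite rooted poset. -/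
def FRP.down (P : FRP) (p : P.carrier) : FRP where
  carrier := {x : P.carrier // x ≤ p}
  root := ⟨p, le_refl p⟩
  le_root := fun x => x.2

/-- An `L`-evaluation: a monotone map from a finite rooted poset into `L`. -/
structure Eval (L : Type) [PartialOrder L] : Type 1 where
  P : FRP
  map : P.carrier → L
  mono : Monotone map

variable {L : Type} [PartialOrder L]

/-- Restriction of an evaluation to the downset of a point. -/
def Eval.restrict (u : Eval L) (p : u.P.carrier) : Eval L where
  P := u.P.down p
  map := fun x => u.map x.1
  mono := fun _ _ h => u.mono h

/-- The value of an evaluation at the root of its domain. -/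
def Eval.rootVal (u : Eval L) : L := u.map u.P.root

/-- The relations `∼ₙ` on `L`-evaluations. -/
def sim (L : Type) [PartialOrder L] : ℕ → Eval L → Eval L → Prop
  | 0 => fun u v => u.rootVal = v.rootVal
  | n+1 => fun u v =>
      (∀ p, ∃ q, sim L n (u.restrict p) (v.restrict q)) ∧
      (∀ q, ∃ p, sim L n (v.restrict q) (u.restrict p))

/-- The relations `≤ₙ`: `lev L n v u` means `v ≤ₙ u`. -/
def lev (L : Type) [PartialOrder L] : ℕ → Eval L → Eval L → Prop
  | 0 => fun v u => v.rootVal ≤ u.rootVal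
  | n+1 => fun v u => ∀ q, ∃ p, sim L n (v.restrict q) (u.restrict p)

/-- `S` is a subpresheaf of `h_L`: closed under restriction. -/
def IsSub (L : Type) [PartialOrder L] (S : Set (Eval L)) : Prop :=
  ∀ u ∈ S, ∀ p, u.restrict p ∈ S

/-- `S` has b-index `n`: closed under `∼ₙ`. -/
def BIndex (L : Type) [PartialOrder L] (n : ℕ) (S : Set (Eval L)) : Prop :=
  ∀ u ∈ S, ∀ v, sim L n u v → v ∈ S

/-- `S` has b≤-index `n`: closed under being `≤ₙ`-below a member. -/
def BleIndex (L : Type) [PartialOrder L] (n : ℕ) (S : Set (Eval L)) : Prop :=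
  ∀ u ∈ S, ∀ v, lev L n v u → v ∈ S

/-- `↓ₙ u`. -/
def downSet (L : Type) [PartialOrder L] (n : ℕ) (u : Eval L) : Set (Eval L) :=
  {v | lev L n v u}

/-- Pointwise description of Heyting implication of subpresheaves. -/
def himpPt (L : Type) [PartialOrder L] (S T : Set (Eval L)) : Set (Eval L) :=
  {u | ∀ p, u.restrict p ∈ S → u.restrict p ∈ T}

/-- The embedding of downward closed subsets of `L` into subpresheaves. -/
def iota (L : Type) [PartialOrder L] (d : Set L) : Set (Eval L) :=
  {u | u.rootVal ∈ d}

/-- Membership in the Heyting algebra `S(h_L)`: subpresheaves with a b-index. -/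
def InS (L : Type) [PartialOrder L] (S : Set (Eval L)) : Prop :=
  IsSub L S ∧ ∃ n, BIndex L n S

/-- `ev_f`. -/
def evalMap (L : Type) [PartialOrder L] (f : Eval L) (X : Set (Eval L)) : Set f.P.carrier :=
  {p | f.restrict p ∈ X}

/-- Heyting implication of downward closed subsets of a poset. -/
def himpD {M : Type} [PartialOrder M] (a b : Set M) : Set M :=
  {p | ∀ q ≤ p, q ∈ a → q ∈ b}

/-- Iterated invariant type. -/
def invT (L : Type) : ℕ → Type
  | 0 => L
  | n+1 => Set (invT L n)

instance invT.finite (L : Type) [Finite L] : ∀ n, Finite (invT L n)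
  | 0 => ‹Finite L›
  | n+1 => by
      haveI := invT.finite L n
      exact inferInstanceAs (Finite (Set (invT L n)))

instance (L : Type) (n : ℕ) : Membership (invT L n) (invT L (n+1)) :=
  inferInstanceAs (Membership (invT L n) (Set (invT L n)))

instance (L : Type) (n : ℕ) : HasSubset (invT L (n+1)) :=
  ⟨fun a b => Set.Subset (α := invT L n) a b⟩

instance (L : Type) [PartialOrder L] : PartialOrder (invT L 0) :=
  inferInstanceAs (PartialOrder L)

/-- The `n`-th invariant of an evaluation. -/
def invE (L : Type) [PartialOrder L] : (n : ℕ) → Eval L → invT L n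
  | 0, u => u.rootVal
  | n+1, u => {t | ∃ p, invE L n (u.restrict p) = t}

/-- The order on invariants. -/
def levT (L : Type) [PartialOrder L] : (n : ℕ) → invT L n → invT L n → Prop
  | 0 => fun a b => a ≤ b
  | n+1 => fun a b => a ⊆ b

theorem invE_succ_mem {L : Type} [PartialOrder L] {n : ℕ} {u : Eval L} {t : invT L n} :
    t ∈ invE L (n+1) u ↔ ∃ p, invE L n (u.restrict p) = t := Iff.rfl

theorem levT_refl (n : ℕ) (a : invT L n) : levT L n a a := by
  cases n with
  | zero => exact le_refl a
  | succ n => exact Set.Subset.refl a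

theorem levT_trans {n : ℕ} {a b c : invT L n} (h1 : levT L n a b) (h2 : levT L n b c) :
    levT L n a c := by
  cases n with
  | zero => exact le_trans h1 h2
  | succ n => exact Set.Subset.trans h1 h2

theorem levT_antisymm {n : ℕ} {a b : invT L n} (h1 : levT L n a b) (h2 : levT L n b a) :
    a = b := by
  cases n with
  | zero => exact le_antisymm h1 h2
  | succ n => exact Set.Subset.antisymm h1 h2

theorem sim_iff (L : Type) [PartialOrder L] :
    ∀ (n : ℕ) (u v : Eval L), sim L n u v ↔ invE L n u = invE L n v
  | 0, u, v => Iff.rfl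
  | n+1, u, v => by
    show ((∀ p, ∃ q, sim L n (u.restrict p) (v.restrict q)) ∧
          (∀ q, ∃ p, sim L n (v.restrict q) (u.restrict p))) ↔ _
    constructor
    · rintro ⟨h1, h2⟩
      apply Set.Subset.antisymm
      · rintro t ⟨p, rfl⟩
        obtain ⟨q, hq⟩ := h1 p
        exact ⟨q, ((sim_iff L n _ _).mp hq).symm⟩
      · rintro t ⟨q, rfl⟩
        obtain ⟨p, hp⟩ := h2 q
        exact ⟨p, ((sim_iff L n _ _).mp hp).symm⟩
    · intro h
      constructor
      · intro p
        have hm : invE L n (u.restrict p) ∈ invE L (n+1) v := h ▸ ⟨p, rfl⟩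
        obtain ⟨q, hq⟩ := hm
        exact ⟨q, (sim_iff L n _ _).mpr hq.symm⟩
      · intro q
        have hm : invE L n (v.restrict q) ∈ invE L (n+1) u := h ▸ ⟨q, rfl⟩
        obtain ⟨p, hp⟩ := hm
        exact ⟨p, (sim_iff L n _ _).mpr hp.symm⟩

theorem lev_iff (L : Type) [PartialOrder L] (n : ℕ) (v u : Eval L) :
    lev L n v u ↔ levT L n (invE L n v) (invE L n u) := by
  cases n with
  | zero => exact Iff.rfl
  | succ n =>
    show (∀ q, ∃ p, sim L n (v.restrict q) (u.restrict p)) ↔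
      invE L (n+1) v ⊆ invE L (n+1) u
    constructor
    · rintro h t ⟨q, rfl⟩
      obtain ⟨p, hp⟩ := h q
      exact ⟨p, ((sim_iff L n _ _).mp hp).symm⟩
    · intro h q
      obtain ⟨p, hp⟩ := h ⟨q, rfl⟩
      exact ⟨p, (sim_iff L n _ _).mpr hp.symm⟩

/-- `downSet` through the invariant. -/
def dsT (L : Type) [PartialOrder L] (n : ℕ) (t : invT L n) : Set (Eval L) :=
  {x | levT L n (invE L n x) t}

theorem downSet_eq_dsT (L : Type) [PartialOrder L] (n : ℕ) (w : Eval L) :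
    downSet L n w = dsT L n (invE L n w) := by
  ext x
  exact lev_iff L n x w

/-- the identity expressing `↓ₙ₊₁u` via Heyting operations on the `↓ₙv`,
together with finiteness (up to repetitions) of the intersections and unions involved. -/
theorem downSet_succ_identity (L : Type) [PartialOrder L] [Finite L]
    (n : ℕ) (u : Eval L) :
    downSet L (n+1) u =
      (⋂ v ∈ {v : Eval L | ∀ p, ¬ sim L n (u.restrict p) v},
        himpPt L (downSet L n v) (⋃ w ∈ {w : Eval L | ¬ lev L n v w}, downSet L n w)) ∧
    (∀ v : Eval L,
      Set.Finite {A : Set (Eval L) | ∃ w, ¬ lev L n v w ∧ A = downSet L n w}) ∧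
    Set.Finite {A : Set (Eval L) | ∃ v : Eval L, (∀ p, ¬ sim L n (u.restrict p) v) ∧
      A = himpPt L (downSet L n v)
            (⋃ w ∈ {w : Eval L | ¬ lev L n v w}, downSet L n w)} := by
  refine ⟨?_, ?_, ?_⟩
  · ext x
    simp only [downSet, Set.mem_setOf_eq, Set.mem_iInter, himpPt, Set.mem_iUnion]
    show lev L (n+1) x u ↔ _
    show (∀ q, ∃ p, sim L n (x.restrict q) (u.restrict p)) ↔ _
    constructor
    · intro hx v hv q hq
      obtain ⟨p, hp⟩ := hx q
      have hinv : invE L n (x.restrict q) = invE L n (u.restrict p) := (sim_iff L n _ _).mp hp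
      refine ⟨u.restrict p, ?_, ?_⟩
      · intro hvw
        apply hv p
        apply (sim_iff L n _ _).mpr
        apply levT_antisymm
        · have h1 : levT L n (invE L n (x.restrict q)) (invE L n v) := (lev_iff L n _ _).mp hq
          rw [hinv] at h1
          exact h1
        · exact (lev_iff L n _ _).mp hvw
      · apply (lev_iff L n _ _).mpr
        rw [hinv]
        exact levT_refl n _
    · intro h q
      by_contra hc
      push_neg at hc
      have hv : ∀ p, ¬ sim L n (u.restrict p) (x.restrict q) := by
        intro p hp
        exact hc p ((sim_iff L n _ _).mpr ((sim_iff L n _ _).mp hp).symm)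
      obtain ⟨w, hw1, hw2⟩ := h (x.restrict q) hv q ((lev_iff L n _ _).mpr (levT_refl n _))
      exact hw1 hw2
  · intro v
    apply Set.Finite.subset (Set.finite_range (dsT L n))
    rintro A ⟨w, -, rfl⟩
    exact ⟨invE L n w, (downSet_eq_dsT L n w).symm⟩
  · apply Set.Finite.subset (Set.finite_range (fun t : invT L n =>
      himpPt L (dsT L n t) (⋃ w ∈ {w : Eval L | ¬ levT L n t (invE L n w)}, downSet L n w)))
    rintro A ⟨v, -, rfl⟩
    refine ⟨invE L n v, ?_⟩
    have hset : {w : Eval L | ¬ levT L n (invE L n v) (invE L n w)} =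
        {w : Eval L | ¬ lev L n v w} := by
      ext w
      simp only [Set.mem_setOf_eq, lev_iff]
    simp only [hset, downSet_eq_dsT]
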